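/- If a strongly unimodular matrix N contains, up to row and column permutations and scaling of rows and columns by -1, the 3-by-3 matrix N2 = [[1,1,0],[0,1,1],[1,1,1]] as a submatrix, then a contradiction follows; equivalently, no strongly unimodular matrix has a submatrix which, after permuting rows and columns and multiplying some rows and columns by -1, equals [[1,1,0],[0,1,1],[1,1,1]]. -/

import Mathlib

/-- A matrix is strongly unimodular if it is totally unimodular and remains totally
unimodular after replacing any single nonzero entry by `0`. -/
def IsStronglyUnimodular {m n : Type*} [DecidableEq m] [DecidableEq n]
    (A : Matrix m n ℚ) : Prop :=
  A.IsTotallyUnimodular ∧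
    ∀ i j, A i j ≠ 0 → (A.updateRow i (Function.update (A i) j 0)).IsTotallyUnimodular
/-- No strongly unimodular matrix contains, up to row and column permutations and scaling
of rows and columns by -1, the matrix N2 = [[1,1,0],[0,1,1],[1,1,1]] as a submatrix. -/
theorem no_N2_submatrix_of_isStronglyUnimodular {m n : Type*} [DecidableEq m] [DecidableEq n]
    (A : Matrix m n ℚ) (hA : IsStronglyUnimodular A) :
    ¬ ∃ (f : Fin 3 → m) (g : Fin 3 → n) (r c : Fin 3 → ℚ),
        Function.Injective f ∧ Function.Injective g ∧
        (∀ i, r i = 1 ∨ r i = -1) ∧ (∀ j, c j = 1 ∨ c j = -1) ∧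
        (∀ i j, r i * A (f i) (g j) * c j =
          (!![1, 1, 0; 0, 1, 1; 1, 1, 1] : Matrix (Fin 3) (Fin 3) ℚ) i j) := by
  rintro ⟨f, g, r, c, hf, hg, hr, hc, h⟩
  -- entry values of A
  have hAe : ∀ i j, A (f i) (g j) =
      r i * (!![1, 1, 0; 0, 1, 1; 1, 1, 1] : Matrix (Fin 3) (Fin 3) ℚ) i j * c j := by
    intro i j
    rw [← h i j]
    rcases hr i with h1 | h1 <;> rcases hc j with h2 | h2 <;> rw [h1, h2] <;> ring
  have hne : A (f 2) (g 1) ≠ 0 := by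
    intro h0
    have := h 2 1
    rw [h0] at this
    norm_num [Matrix.cons_val_two, Matrix.cons_val_one, Matrix.head_cons, Matrix.vecHead, Matrix.vecTail] at this
  have hTU := hA.2 (f 2) (g 1) hne
  set B := A.updateRow (f 2) (Function.update (A (f 2)) (g 1) 0) with hBdef
  have key := hTU 3 f g hf hg
  have hB21 : B (f 2) (g 1) = 0 := by simp [hBdef]
  have hBrow : ∀ j : Fin 3, j ≠ 1 → B (f 2) (g j) = A (f 2) (g j) := by
    intro j hj
    have : g j ≠ g 1 := fun e => hj (hg e)
    simp [hBdef, Function.update_of_ne this]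
  have hBne : ∀ i : Fin 3, i ≠ 2 → ∀ j : Fin 3, B (f i) (g j) = A (f i) (g j) := by
    intro i hi j
    have : f i ≠ f 2 := fun e => hi (hf e)
    simp [hBdef, Matrix.updateRow_ne this]
  have hdet : (B.submatrix f g).det = (r 0 * r 1 * r 2 * c 0 * c 1 * c 2) * 2 := by
    rw [Matrix.det_fin_three]
    simp only [Matrix.submatrix_apply]
    rw [hBne 0 (by decide) 0, hBne 0 (by decide) 1, hBne 0 (by decide) 2,
        hBne 1 (by decide) 0, hBne 1 (by decide) 1, hBne 1 (by decide) 2,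
        hB21, hBrow 0 (by decide), hBrow 2 (by decide)]
    rw [hAe 0 0, hAe 0 1, hAe 0 2, hAe 1 0, hAe 1 1, hAe 1 2, hAe 2 0, hAe 2 2]
    norm_num [Matrix.cons_val_two, Matrix.cons_val_one, Matrix.head_cons, Matrix.vecHead, Matrix.vecTail]
    ring
  have hr2 : ∀ i, r i ^ 2 = 1 := fun i => by rcases hr i with h1 | h1 <;> rw [h1] <;> norm_num
  have hc2 : ∀ j, c j ^ 2 = 1 := fun j => by rcases hc j with h1 | h1 <;> rw [h1] <;> norm_num
  have hsq : (B.submatrix f g).det ^ 2 = 4 := by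
    rw [hdet]
    have : ((r 0 * r 1 * r 2 * c 0 * c 1 * c 2) * 2) ^ 2 =
        (r 0 ^ 2) * (r 1 ^ 2) * (r 2 ^ 2) * (c 0 ^ 2) * (c 1 ^ 2) * (c 2 ^ 2) * 4 := by ring
    rw [this, hr2, hr2, hr2, hc2, hc2, hc2]
    norm_num
  rcases key with ⟨s, hs⟩
  cases s <;> rw [← hs] at hsq <;> norm_num at hsq
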